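/- Let Π be a 2-plane in F_q^n and p a point not in Π. Let l₁ ≠ l₂ be two lines through p, each of which either meets Π or is parallel to Π (i.e., has direction vector in the direction space of Π). Let Π_p be the 2-plane spanned by l₁ and l₂. Then any line l₃ through p contained in Π_p also meets Π or is parallel to Π. -/
import Mathlib


/-- Key planebrush separation step. The 2-plane `Π = {x | x - a ∈ W}` with
`dim W = 2`; `p ∉ Π`; `l₁, l₂` are distinct lines through `p` with directions
`v₁, v₂`, each meeting `Π` or parallel to `Π`; `Π_p = p + span{v₁, v₂}` is the
plane spanned by `l₁` and `l₂`; `l₃` is a line through `p` contained in `Π_p`,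
i.e. its direction `v₃` lies in `span{v₁, v₂}`. Then `l₃` meets `Π` or is
parallel to `Π`. -/
theorem stmt_17 {F : Type*} [Field F] [Fintype F] {n : ℕ}
    (a p v₁ v₂ v₃ : Fin n → F) (W : Submodule F (Fin n → F))
    (hW : Module.finrank F W = 2)
    (hp : p - a ∉ W)
    (hv₁ : v₁ ≠ 0) (hv₂ : v₂ ≠ 0) (hv₃ : v₃ ≠ 0)
    (hne : ∀ c : F, v₂ ≠ c • v₁)
    (h₁ : (∃ t : F, (p + t • v₁) - a ∈ W) ∨ v₁ ∈ W)
    (h₂ : (∃ t : F, (p + t • v₂) - a ∈ W) ∨ v₂ ∈ W)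
    (hv₃mem : v₃ ∈ Submodule.span F ({v₁, v₂} : Set (Fin n → F))) :
    (∃ t : F, (p + t • v₃) - a ∈ W) ∨ v₃ ∈ W := by
  rw [Submodule.mem_span_pair] at hv₃mem
  obtain ⟨c₁, c₂, hc⟩ := hv₃mem
  rcases h₁ with ⟨t₁, h₁⟩ | h₁ <;> rcases h₂ with ⟨t₂, h₂⟩ | h₂
  · -- both lines meet Π
    have ht₁ : t₁ ≠ 0 := by rintro rfl; simp only [zero_smul, add_zero] at h₁; exact hp h₁
    have ht₂ : t₂ ≠ 0 := by rintro rfl; simp only [zero_smul, add_zero] at h₂; exact hp h₂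
    have key : t₁ • v₁ - t₂ • v₂ ∈ W := by
      have h := W.sub_mem h₁ h₂
      have e : (p + t₁ • v₁ - a) - (p + t₂ • v₂ - a) = t₁ • v₁ - t₂ • v₂ := by abel
      rwa [e] at h
    by_cases hd : t₂ * c₁ + t₁ * c₂ = 0
    · right
      have e : v₃ = (-(c₂/t₂)) • (t₁ • v₁ - t₂ • v₂) := by
        rw [← hc]
        match_scalars <;> field_simp <;> linear_combination hd
      rw [e]
      exact W.smul_mem _ key
    · left
      refine ⟨t₁ * t₂ / (t₂ * c₁ + t₁ * c₂), ?_⟩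
      have e : p + (t₁ * t₂ / (t₂ * c₁ + t₁ * c₂)) • v₃ - a =
          (p + t₁ • v₁ - a) - ((t₁ * t₂ / (t₂ * c₁ + t₁ * c₂)) * c₂ / t₂) •
            (t₁ • v₁ - t₂ • v₂) := by
        rw [← hc]
        match_scalars <;> field_simp <;> ring
      rw [e]
      exact W.sub_mem h₁ (W.smul_mem _ key)
  · -- l₁ meets, l₂ parallel
    have ht₁ : t₁ ≠ 0 := by rintro rfl; simp only [zero_smul, add_zero] at h₁; exact hp h₁
    by_cases hc₁ : c₁ = 0
    · right
      have e : v₃ = c₂ • v₂ := by rw [← hc, hc₁]; simp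
      rw [e]; exact W.smul_mem _ h₂
    · left
      refine ⟨t₁ / c₁, ?_⟩
      have e : p + (t₁ / c₁) • v₃ - a = (p + t₁ • v₁ - a) + ((t₁ / c₁) * c₂) • v₂ := by
        rw [← hc]
        match_scalars <;> field_simp <;> ring
      rw [e]
      exact W.add_mem h₁ (W.smul_mem _ h₂)
  · -- l₁ parallel, l₂ meets
    have ht₂ : t₂ ≠ 0 := by rintro rfl; simp only [zero_smul, add_zero] at h₂; exact hp h₂
    by_cases hc₂ : c₂ = 0
    · right
      have e : v₃ = c₁ • v₁ := by rw [← hc, hc₂]; simp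
      rw [e]; exact W.smul_mem _ h₁
    · left
      refine ⟨t₂ / c₂, ?_⟩
      have e : p + (t₂ / c₂) • v₃ - a = (p + t₂ • v₂ - a) + ((t₂ / c₂) * c₁) • v₁ := by
        rw [← hc]
        match_scalars <;> field_simp <;> ring
      rw [e]
      exact W.add_mem h₂ (W.smul_mem _ h₁)
  · right
    rw [← hc]
    exact W.add_mem (W.smul_mem _ h₁) (W.smul_mem _ h₂)
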